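/- Let X,d be a standard quasi-metric space, U a d-Scott open subset of X, and define d(x, U^c) = sup{r ∈ ℝ≥0 : (x,r) ∈ Û}, where Û is the largest Scott-open subset of B(X,d) whose intersection with X is contained in U. Then d(x, U^c) ≤ d(x,y) + d(y, U^c) for all x, y ∈ X, and d(x, U^c) = 0 iff x ∉ U. -/

import Mathlib

open scoped ENNReal NNReal Classical

/-- A formal ball: a point together with a non-negative real radius. -/
structure FormalBall (X : Type*) where
  center : X
  radius : ℝ≥0

/-- A quasi-metric on `X`: a `[0,∞]`-valued distance with `d x x = 0`, the triangle
inequality, and `d x y = d y x = 0 → x = y`. -/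
structure QuasiMetric (X : Type*) where
  d : X → X → ℝ≥0∞
  refl : ∀ x, d x x = 0
  triangle : ∀ x y z, d x z ≤ d x y + d y z
  separated : ∀ x y, d x y = 0 → d y x = 0 → x = y

/-- The order on formal balls: `(x,r) ≤ (y,s)` iff `d x y ≤ r - s`
(equivalently `s ≤ r` and `d x y ≤ r - s`). -/
def ballLE {X : Type*} (q : QuasiMetric X) (b c : FormalBall X) : Prop :=
  c.radius ≤ b.radius ∧ q.d b.center c.center ≤ ↑(b.radius - c.radius)

/-- The partial order of formal balls `B(X,d)`. -/
def ballOrder {X : Type*} (q : QuasiMetric X) : PartialOrder (FormalBall X) where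
  le := ballLE q
  le_refl b := ⟨le_rfl, by simp [ballLE, q.refl]⟩
  le_trans a b c hab hbc := ⟨hbc.1.trans hab.1, by
    calc q.d a.center c.center ≤ q.d a.center b.center + q.d b.center c.center :=
          q.triangle _ _ _
      _ ≤ ↑(a.radius - b.radius) + ↑(b.radius - c.radius) := add_le_add hab.2 hbc.2
      _ = ↑(a.radius - c.radius) := by
          rw [← ENNReal.coe_add, tsub_add_tsub_cancel hab.1 hbc.1]⟩
  le_antisymm a b hab hba := by
    have hr : b.radius = a.radius := le_antisymm hab.1 hba.1
    have h1 : q.d a.center b.center = 0 := le_antisymm (by simpa [hr] using hab.2) bot_le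
    have h2 : q.d b.center a.center = 0 := le_antisymm (by simpa [hr] using hba.2) bot_le
    have hc := q.separated _ _ h1 h2
    cases a; cases b; simp_all

/-- Standardness: a directed family of formal balls has a supremum iff the family with all
radii uniformly shifted by `s` has one. -/
def Standard {X : Type*} (q : QuasiMetric X) : Prop :=
  letI := ballOrder q
  ∀ S : Set (FormalBall X), S.Nonempty → DirectedOn (· ≤ ·) S → ∀ s : ℝ≥0,
    ((∃ b, IsLUB S b) ↔
      ∃ b, IsLUB ((fun c : FormalBall X => FormalBall.mk c.center (c.radius + s)) '' S) b)

/-- Scott-open: upward closed and inaccessible by suprema of nonempty directed sets. -/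
def ScottOpen {α : Type*} [Preorder α] (U : Set α) : Prop :=
  (∀ a ∈ U, ∀ b, a ≤ b → b ∈ U) ∧
  ∀ S : Set α, S.Nonempty → DirectedOn (· ≤ ·) S → ∀ a, IsLUB S a → a ∈ U → (S ∩ U).Nonempty

/-- in a standard quasi-metric space, for a `d`-Scott open `U ⊆ X`, with
`Û` the largest Scott-open subset of `B(X,d)` meeting `X` inside `U`, and
`d(x,U^c) = sup {r : (x,r) ∈ Û}`, we have the triangle inequality
`d(x,U^c) ≤ d(x,y) + d(y,U^c)` and `d(x,U^c) = 0 ↔ x ∉ U`. -/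
theorem dist_to_complement {X : Type*} (q : QuasiMetric X) (hstd : Standard q)
    (U : Set X)
    (hU : letI := ballOrder q;
      ∃ V : Set (FormalBall X), ScottOpen V ∧
        U = {x : X | (⟨x, 0⟩ : FormalBall X) ∈ V}) :
    letI := ballOrder q
    let hatU : Set (FormalBall X) :=
      ⋃₀ {V : Set (FormalBall X) | ScottOpen V ∧
        {x : X | (⟨x, 0⟩ : FormalBall X) ∈ V} ⊆ U}
    let D : X → ℝ≥0∞ := fun x =>
      ⨆ r ∈ {r : ℝ≥0 | (⟨x, r⟩ : FormalBall X) ∈ hatU}, (r : ℝ≥0∞)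
    (∀ x y : X, D x ≤ q.d x y + D y) ∧ (∀ x : X, D x = 0 ↔ x ∉ U) := by
  classical
  letI := ballOrder q
  intro hatU D
  have hup : ∀ a ∈ hatU, ∀ b, a ≤ b → b ∈ hatU := by
    rintro a ha b hab
    obtain ⟨V, hV, haV⟩ := ha
    exact ⟨V, hV, hV.1.1 a haV b hab⟩
  have hscott : ScottOpen hatU := by
    refine ⟨hup, ?_⟩
    rintro S hS hdir a ha haU
    obtain ⟨V, hV, haV⟩ := haU
    obtain ⟨b, hbS, hbV⟩ := hV.1.2 S hS hdir a ha haV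
    exact ⟨b, hbS, V, hV, hbV⟩
  have hmem0 : ∀ x : X, (⟨x, 0⟩ : FormalBall X) ∈ hatU ↔ x ∈ U := by
    intro x
    constructor
    · rintro ⟨V, hV, hxV⟩
      exact hV.2 hxV
    · intro hx
      obtain ⟨V, hVo, hVU⟩ := hU
      refine ⟨V, ⟨hVo, le_of_eq hVU.symm⟩, ?_⟩
      rw [hVU] at hx; exact hx
  have hdown : ∀ (x : X) (r s : ℝ≥0), s ≤ r →
      (⟨x, r⟩ : FormalBall X) ≤ (⟨x, s⟩ : FormalBall X) := by
    intro x r s h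
    exact ⟨h, by simp [q.refl]⟩
  have key : ∀ x y : X, ∀ r : ℝ≥0, (⟨x, r⟩ : FormalBall X) ∈ hatU →
      (r : ℝ≥0∞) ≤ q.d x y + D y := by
    intro x y r hr
    rcases eq_top_or_lt_top (q.d x y) with h | h
    · simp [h]
    · set δ := (q.d x y).toNNReal with hδdef
      have hδ : q.d x y = (δ : ℝ≥0∞) := (ENNReal.coe_toNNReal h.ne).symm
      rcases le_total r δ with hrδ | hδr
      · calc (r : ℝ≥0∞) ≤ (δ : ℝ≥0∞) := ENNReal.coe_le_coe.2 hrδ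
          _ ≤ q.d x y + D y := by rw [hδ]; exact le_self_add
      · have hmem : (⟨y, r - δ⟩ : FormalBall X) ∈ hatU := by
          refine hup _ hr _ ⟨tsub_le_self, ?_⟩
          rw [tsub_tsub_cancel_of_le hδr, ← hδ]
        have hDy : ((r - δ : ℝ≥0) : ℝ≥0∞) ≤ D y :=
          le_biSup (fun r : ℝ≥0 => (r : ℝ≥0∞)) hmem
        calc (r : ℝ≥0∞) = ((δ + (r - δ) : ℝ≥0) : ℝ≥0∞) := by
              rw [add_tsub_cancel_of_le hδr]
          _ = (δ : ℝ≥0∞) + ((r - δ : ℝ≥0) : ℝ≥0∞) := ENNReal.coe_add δ (r - δ)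
          _ ≤ q.d x y + D y := by rw [hδ]; exact add_le_add_right hDy _
  refine ⟨fun x y => iSup₂_le (key x y), fun x => ?_⟩
  constructor
  · intro hDx hxU
    have h0 : (⟨x, 0⟩ : FormalBall X) ∈ hatU := (hmem0 x).2 hxU
    set S : Set (FormalBall X) := {b | b.center = x ∧ 0 < b.radius} with hSdef
    have hSne : S.Nonempty := ⟨⟨x, 1⟩, rfl, one_pos⟩
    have hSdir : DirectedOn (· ≤ ·) S := by
      rintro c ⟨hc, hcr⟩ e ⟨he, her⟩
      refine ⟨⟨x, min c.radius e.radius⟩, ⟨rfl, lt_min hcr her⟩, ?_, ?_⟩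
      · exact ⟨min_le_left _ _, by rw [hc, q.refl]; exact zero_le⟩
      · exact ⟨min_le_right _ _, by rw [he, q.refl]; exact zero_le⟩
    have hlub : IsLUB S (⟨x, 0⟩ : FormalBall X) := by
      constructor
      · rintro c ⟨hc, hcr⟩
        exact ⟨zero_le, by rw [hc, q.refl]; exact zero_le⟩
      · rintro ⟨y, t⟩ hub
        have ht : ∀ r : ℝ≥0, 0 < r → t ≤ r ∧ q.d x y ≤ ((r - t : ℝ≥0) : ℝ≥0∞) := by
          intro r hr
          exact hub (show (⟨x, r⟩ : FormalBall X) ∈ S from ⟨rfl, hr⟩)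
        have ht0 : t = 0 := by
          by_contra hne
          have h2 := (ht (t / 2) (by positivity)).1
          exact absurd h2 (not_le.2 (NNReal.half_lt_self hne))
        subst ht0
        have hd0 : q.d x y = 0 := by
          by_contra hne
          obtain ⟨c, hc0, hcd⟩ := exists_between (pos_iff_ne_zero.mpr hne)
          have hct : c ≠ ⊤ := ne_top_of_lt hcd
          have hcpos : 0 < c.toNNReal := ENNReal.toNNReal_pos hc0.ne' hct
          have := (ht c.toNNReal hcpos).2
          rw [tsub_zero, ENNReal.coe_toNNReal hct] at this
          exact absurd this (not_le.2 hcd)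
        exact ⟨le_rfl, by simp [hd0]⟩
    obtain ⟨b, ⟨hbc, hbr⟩, hbU⟩ := hscott.2 S hSne hSdir _ hlub h0
    have hbU' : (⟨x, b.radius⟩ : FormalBall X) ∈ hatU := by
      rw [← hbc]; exact hbU
    have hle : (b.radius : ℝ≥0∞) ≤ D x :=
      le_biSup (fun r : ℝ≥0 => (r : ℝ≥0∞)) hbU'
    rw [hDx] at hle
    exact absurd hle (by simpa using hbr.ne')
  · intro hx
    refine le_antisymm (iSup₂_le fun r hr => ?_) (zero_le)
    exact absurd ((hmem0 x).1 (hup _ hr _ (hdown x r 0 (zero_le)))) hx
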